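/- arXiv:2010.15455 — 3 statements merged into one kernel-verified Lean document; each statement's English description precedes it below -/
import Mathlib

section
/- Theorem 1 (subadditivity of the ES coalition game): Assume 0 ≤ c⁻_t ≤ c⁺_t for every time slot t. Then for any two disjoint coalitions S¹, S² ⊆ 𝒩 (S¹ ∩ S² = ∅), the coalition values satisfy ν(S¹ ∪ S²) ≤ ν(S¹) + ν(S²). -/
open Finset

/-- Fixed data of the ES sharing model. -/
structure ESParams (ι Ω : Type) (T : ℕ) where
  /-- scenario weights -/
  ρ : Ω → ℝ
  /-- purchase prices -/
  cbuy : Fin T → ℝ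
  /-- selling prices -/
  csell : Fin T → ℝ
  /-- demand-charge price -/
  cmax : ℝ
  /-- amortized energy-capacity price -/
  ke : ℝ
  /-- amortized power-capacity price -/
  kp : ℝ
  /-- charging efficiency -/
  ηch : ℝ
  /-- discharging efficiency -/
  ηdis : ℝ
  /-- charging rate limit -/
  pchmax : ℝ
  /-- discharging rate limit -/
  pdismax : ℝ
  /-- net load of building `i` at time `t` in scenario `ω` -/
  d : ι → Fin T → Ω → ℝ
  ρ_nonneg : ∀ ω, 0 ≤ ρ ω
  cmax_nonneg : 0 ≤ cmax
  ke_nonneg : 0 ≤ ke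
  kp_nonneg : 0 ≤ kp
  ηch_pos : 0 < ηch
  ηch_le_one : ηch ≤ 1
  ηdis_pos : 0 < ηdis
  ηdis_le_one : ηdis ≤ 1
  pchmax_nonneg : 0 ≤ pchmax
  pdismax_nonneg : 0 ≤ pdismax

/-- A (candidate) solution: capacities and per-building operation variables. -/
structure ESSol (ι Ω : Type) (T : ℕ) where
  E : ℝ
  P : ℝ
  pch : ι → Fin T → Ω → ℝ
  pdis : ι → Fin T → Ω → ℝ
  sto : ι → ℕ → Ω → ℝ
  pbuy : ι → Fin T → Ω → ℝ
  psell : ι → Fin T → Ω → ℝ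
  pmax : ι → Ω → ℝ

variable {ι Ω : Type} {T : ℕ}

/-- Relaxed feasibility (complementarity constraints dropped) for coalition `S`. -/
def Feasible [Fintype Ω] (p : ESParams ι Ω T) (S : Finset ι) (s : ESSol ι Ω T) : Prop :=
  0 ≤ s.E ∧ 0 ≤ s.P ∧
  (∀ i ∈ S, ∀ ω : Ω, ∀ t : Fin T,
    0 ≤ s.pch i t ω ∧ s.pch i t ω ≤ p.pchmax ∧
    0 ≤ s.pdis i t ω ∧ s.pdis i t ω ≤ p.pdismax ∧
    0 ≤ s.pbuy i t ω ∧ 0 ≤ s.psell i t ω ∧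
    s.pbuy i t ω - s.psell i t ω = s.pch i t ω - s.pdis i t ω + p.d i t ω ∧
    s.pbuy i t ω ≤ s.pmax i ω ∧ s.psell i t ω ≤ s.pmax i ω ∧
    s.sto i (t.1 + 1) ω = s.sto i t.1 ω + p.ηch * s.pch i t ω - s.pdis i t ω / p.ηdis) ∧
  (∀ i ∈ S, ∀ ω : Ω,
    s.sto i 0 ω = 0 ∧ 0 ≤ s.pmax i ω ∧ ∀ n : ℕ, n ≤ T → 0 ≤ s.sto i n ω) ∧
  (∀ ω : Ω, ∀ t : Fin T,
    (∑ i ∈ S, s.sto i t.1 ω) ≤ s.E ∧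
    (∑ i ∈ S, s.pch i t ω) ≤ s.P ∧
    (∑ i ∈ S, s.pdis i t ω) ≤ s.P)

/-- Total cost (capital plus weighted operation cost) of solution `s` for coalition `S`. -/
def cost [Fintype Ω] (p : ESParams ι Ω T) (S : Finset ι) (s : ESSol ι Ω T) : ℝ :=
  p.ke * s.E + p.kp * s.P +
    ∑ ω : Ω, p.ρ ω * ∑ i ∈ S,
      ((∑ t : Fin T, (p.cbuy t * s.pbuy i t ω - p.csell t * s.psell i t ω))
        + p.cmax * s.pmax i ω)

/-- Coalition value: infimum of total cost over relaxed feasible solutions. -/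
noncomputable def nu [Fintype Ω] (p : ESParams ι Ω T) (S : Finset ι) : ℝ :=
  sInf {c : ℝ | ∃ s : ESSol ι Ω T, Feasible p S s ∧ cost p S s = c}

/-- The trivial (no-storage) solution. -/
noncomputable def sol0 (p : ESParams ι Ω T) : ESSol ι Ω T where
  E := 0
  P := 0
  pch := fun _ _ _ => 0
  pdis := fun _ _ _ => 0
  sto := fun _ _ _ => 0
  pbuy := fun i t ω => max (p.d i t ω) 0
  psell := fun i t ω => max (-(p.d i t ω)) 0
  pmax := fun i ω => ∑ t : Fin T, |p.d i t ω|

lemma costSet_nonempty [Fintype Ω] (p : ESParams ι Ω T) (S : Finset ι) :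
    {c : ℝ | ∃ s : ESSol ι Ω T, Feasible p S s ∧ cost p S s = c}.Nonempty := by
  refine ⟨_, ⟨sol0 p, ?_, rfl⟩⟩
  unfold Feasible sol0
  refine ⟨le_refl 0, le_refl 0, ?_, ?_, ?_⟩
  · intro i hi ω t
    refine ⟨le_refl 0, p.pchmax_nonneg, le_refl 0, p.pdismax_nonneg,
      le_max_right _ _, le_max_right _ _, ?_, ?_, ?_, by simp⟩
    · simp [max_zero_sub_max_neg_zero_eq_self]
    · calc max (p.d i t ω) 0 ≤ |p.d i t ω| := max_le (le_abs_self _) (abs_nonneg _)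
        _ ≤ ∑ t' : Fin T, |p.d i t' ω| :=
          Finset.single_le_sum (f := fun t' : Fin T => |p.d i t' ω|)
            (fun t' _ => abs_nonneg _) (Finset.mem_univ t)
    · calc max (-(p.d i t ω)) 0 ≤ |p.d i t ω| := max_le (neg_le_abs _) (abs_nonneg _)
        _ ≤ ∑ t' : Fin T, |p.d i t' ω| :=
          Finset.single_le_sum (f := fun t' : Fin T => |p.d i t' ω|)
            (fun t' _ => abs_nonneg _) (Finset.mem_univ t)
  · intro i hi ω
    refine ⟨rfl, ?_, fun n _ => le_refl 0⟩
    show (0:ℝ) ≤ ∑ t : Fin T, |p.d i t ω|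
    exact Finset.sum_nonneg fun t _ => abs_nonneg _
  · intro ω t
    simp

lemma costSet_bddBelow [Fintype Ω] (p : ESParams ι Ω T)
    (hprice : ∀ t : Fin T, 0 ≤ p.csell t ∧ p.csell t ≤ p.cbuy t) (S : Finset ι) :
    BddBelow {c : ℝ | ∃ s : ESSol ι Ω T, Feasible p S s ∧ cost p S s = c} := by
  refine ⟨∑ ω : Ω, p.ρ ω * ∑ i ∈ S, ∑ t : Fin T,
    -(p.csell t * (|p.d i t ω| + p.pdismax)), ?_⟩
  rintro c ⟨s, ⟨hE, hP, hop, hsto, _⟩, rfl⟩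
  have h1 : 0 ≤ p.ke * s.E := mul_nonneg p.ke_nonneg hE
  have h2 : 0 ≤ p.kp * s.P := mul_nonneg p.kp_nonneg hP
  have h3 : ∀ ω : Ω,
      (∑ i ∈ S, ∑ t : Fin T, -(p.csell t * (|p.d i t ω| + p.pdismax))) ≤
      ∑ i ∈ S, ((∑ t : Fin T, (p.cbuy t * s.pbuy i t ω - p.csell t * s.psell i t ω))
        + p.cmax * s.pmax i ω) := by
    intro ω
    refine Finset.sum_le_sum fun i hi => ?_
    have hpm : 0 ≤ p.cmax * s.pmax i ω := mul_nonneg p.cmax_nonneg (hsto i hi ω).2.1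
    have hterm : ∀ t : Fin T, -(p.csell t * (|p.d i t ω| + p.pdismax)) ≤
        p.cbuy t * s.pbuy i t ω - p.csell t * s.psell i t ω := by
      intro t
      obtain ⟨hch0, _, hdis0, hdisM, hbuy0, hsell0, hbal, _, _, _⟩ := hop i hi ω t
      obtain ⟨hs0, hsM⟩ := hprice t
      have key : p.csell t * (s.pbuy i t ω - s.psell i t ω) =
          p.csell t * (s.pch i t ω - s.pdis i t ω + p.d i t ω) := by rw [hbal]
      nlinarith [mul_nonneg (sub_nonneg.mpr hsM) hbuy0, mul_nonneg hs0 hch0,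
        mul_nonneg hs0 (sub_nonneg.mpr hdisM),
        mul_nonneg hs0 (by linarith [neg_abs_le (p.d i t ω)] :
          (0:ℝ) ≤ |p.d i t ω| + p.d i t ω)]
    calc (∑ t : Fin T, -(p.csell t * (|p.d i t ω| + p.pdismax)))
        ≤ ∑ t : Fin T, (p.cbuy t * s.pbuy i t ω - p.csell t * s.psell i t ω) :=
          Finset.sum_le_sum fun t _ => hterm t
      _ ≤ _ := by linarith
  have h4 : (∑ ω : Ω, p.ρ ω * ∑ i ∈ S, ∑ t : Fin T,
      -(p.csell t * (|p.d i t ω| + p.pdismax))) ≤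
      ∑ ω : Ω, p.ρ ω * ∑ i ∈ S,
        ((∑ t : Fin T, (p.cbuy t * s.pbuy i t ω - p.csell t * s.psell i t ω))
          + p.cmax * s.pmax i ω) :=
    Finset.sum_le_sum fun ω _ => mul_le_mul_of_nonneg_left (h3 ω) (p.ρ_nonneg ω)
  unfold cost
  linarith

/-- Glue two solutions along a coalition split. -/
def glue [DecidableEq ι] (S1 : Finset ι) (s1 s2 : ESSol ι Ω T) : ESSol ι Ω T where
  E := s1.E + s2.E
  P := s1.P + s2.P
  pch := fun i => if i ∈ S1 then s1.pch i else s2.pch i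
  pdis := fun i => if i ∈ S1 then s1.pdis i else s2.pdis i
  sto := fun i => if i ∈ S1 then s1.sto i else s2.sto i
  pbuy := fun i => if i ∈ S1 then s1.pbuy i else s2.pbuy i
  psell := fun i => if i ∈ S1 then s1.psell i else s2.psell i
  pmax := fun i => if i ∈ S1 then s1.pmax i else s2.pmax i

lemma glue_feasible [Fintype Ω] [DecidableEq ι] (p : ESParams ι Ω T)
    {S1 S2 : Finset ι} (hdisj : S1 ∩ S2 = ∅) {s1 s2 : ESSol ι Ω T}
    (h1 : Feasible p S1 s1) (h2 : Feasible p S2 s2) :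
    Feasible p (S1 ∪ S2) (glue S1 s1 s2) := by
  have hd : Disjoint S1 S2 := Finset.disjoint_iff_inter_eq_empty.mpr hdisj
  obtain ⟨hE1, hP1, hop1, hsto1, hcap1⟩ := h1
  obtain ⟨hE2, hP2, hop2, hsto2, hcap2⟩ := h2
  refine ⟨add_nonneg hE1 hE2, add_nonneg hP1 hP2, ?_, ?_, ?_⟩
  · intro i hi ω t
    by_cases hi1 : i ∈ S1
    · simpa [glue, hi1] using hop1 i hi1 ω t
    · have hi2 : i ∈ S2 := (Finset.mem_union.mp hi).resolve_left hi1
      simpa [glue, hi1] using hop2 i hi2 ω t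
  · intro i hi ω
    by_cases hi1 : i ∈ S1
    · simpa [glue, hi1] using hsto1 i hi1 ω
    · have hi2 : i ∈ S2 := (Finset.mem_union.mp hi).resolve_left hi1
      simpa [glue, hi1] using hsto2 i hi2 ω
  · intro ω t
    refine ⟨?_, ?_, ?_⟩
    · calc ∑ i ∈ S1 ∪ S2, (glue S1 s1 s2).sto i t.1 ω
          = (∑ i ∈ S1, s1.sto i t.1 ω) + ∑ i ∈ S2, s2.sto i t.1 ω := by
            rw [Finset.sum_union hd]
            congr 1
            · exact Finset.sum_congr rfl fun i hi => by simp [glue, hi]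
            · refine Finset.sum_congr rfl fun i hi => ?_
              have hn : i ∉ S1 := fun h => Finset.disjoint_left.mp hd h hi
              simp [glue, hn]
        _ ≤ s1.E + s2.E := add_le_add (hcap1 ω t).1 (hcap2 ω t).1
    · calc ∑ i ∈ S1 ∪ S2, (glue S1 s1 s2).pch i t ω
          = (∑ i ∈ S1, s1.pch i t ω) + ∑ i ∈ S2, s2.pch i t ω := by
            rw [Finset.sum_union hd]
            congr 1
            · exact Finset.sum_congr rfl fun i hi => by simp [glue, hi]
            · refine Finset.sum_congr rfl fun i hi => ?_
              have hn : i ∉ S1 := fun h => Finset.disjoint_left.mp hd h hi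
              simp [glue, hn]
        _ ≤ s1.P + s2.P := add_le_add (hcap1 ω t).2.1 (hcap2 ω t).2.1
    · calc ∑ i ∈ S1 ∪ S2, (glue S1 s1 s2).pdis i t ω
          = (∑ i ∈ S1, s1.pdis i t ω) + ∑ i ∈ S2, s2.pdis i t ω := by
            rw [Finset.sum_union hd]
            congr 1
            · exact Finset.sum_congr rfl fun i hi => by simp [glue, hi]
            · refine Finset.sum_congr rfl fun i hi => ?_
              have hn : i ∉ S1 := fun h => Finset.disjoint_left.mp hd h hi
              simp [glue, hn]
        _ ≤ s1.P + s2.P := add_le_add (hcap1 ω t).2.2 (hcap2 ω t).2.2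

lemma glue_cost [Fintype Ω] [DecidableEq ι] (p : ESParams ι Ω T)
    {S1 S2 : Finset ι} (hdisj : S1 ∩ S2 = ∅) (s1 s2 : ESSol ι Ω T) :
    cost p (S1 ∪ S2) (glue S1 s1 s2) = cost p S1 s1 + cost p S2 s2 := by
  have hd : Disjoint S1 S2 := Finset.disjoint_iff_inter_eq_empty.mpr hdisj
  have hsum : ∀ ω : Ω,
      (∑ i ∈ S1 ∪ S2,
        ((∑ t : Fin T, (p.cbuy t * (glue S1 s1 s2).pbuy i t ω
            - p.csell t * (glue S1 s1 s2).psell i t ω))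
          + p.cmax * (glue S1 s1 s2).pmax i ω)) =
      (∑ i ∈ S1, ((∑ t : Fin T, (p.cbuy t * s1.pbuy i t ω - p.csell t * s1.psell i t ω))
          + p.cmax * s1.pmax i ω)) +
      (∑ i ∈ S2, ((∑ t : Fin T, (p.cbuy t * s2.pbuy i t ω - p.csell t * s2.psell i t ω))
          + p.cmax * s2.pmax i ω)) := by
    intro ω
    rw [Finset.sum_union hd]
    congr 1
    · refine Finset.sum_congr rfl fun i hi => ?_
      simp [glue, hi]
    · refine Finset.sum_congr rfl fun i hi => ?_
      have hi1 : i ∉ S1 := fun h => Finset.disjoint_left.mp hd h hi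
      simp [glue, hi1]
  unfold cost
  simp only [hsum, mul_add, Finset.sum_add_distrib]
  simp only [glue]
  ring

/-- **Theorem 1 (subadditivity of the ES coalition game).** If `0 ≤ c⁻ₜ ≤ c⁺ₜ` for every
time slot, then for any disjoint coalitions `S¹, S²`, `ν(S¹ ∪ S²) ≤ ν(S¹) + ν(S²)`. -/
theorem es_coalition_subadditive [Fintype Ω] [DecidableEq ι]
    (p : ESParams ι Ω T)
    (hprice : ∀ t : Fin T, 0 ≤ p.csell t ∧ p.csell t ≤ p.cbuy t)
    (S1 S2 : Finset ι) (hdisj : S1 ∩ S2 = ∅) :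
    nu p (S1 ∪ S2) ≤ nu p S1 + nu p S2 := by
  have hne1 := costSet_nonempty p S1
  have hne2 := costSet_nonempty p S2
  have hbdd := costSet_bddBelow p hprice (S1 ∪ S2)
  have key : ∀ c1 ∈ {c : ℝ | ∃ s : ESSol ι Ω T, Feasible p S1 s ∧ cost p S1 s = c},
      ∀ c2 ∈ {c : ℝ | ∃ s : ESSol ι Ω T, Feasible p S2 s ∧ cost p S2 s = c},
      nu p (S1 ∪ S2) ≤ c1 + c2 := by
    rintro c1 ⟨s1, hf1, rfl⟩ c2 ⟨s2, hf2, rfl⟩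
    exact csInf_le hbdd ⟨glue S1 s1 s2, glue_feasible p hdisj hf1 hf2, glue_cost p hdisj s1 s2⟩
  have step1 : ∀ c1 ∈ {c : ℝ | ∃ s : ESSol ι Ω T, Feasible p S1 s ∧ cost p S1 s = c},
      nu p (S1 ∪ S2) - c1 ≤ nu p S2 := by
    intro c1 hc1
    exact le_csInf hne2 fun c2 hc2 => by linarith [key c1 hc1 c2 hc2]
  have step2 : nu p (S1 ∪ S2) - nu p S2 ≤ nu p S1 :=
    le_csInf hne1 fun c1 hc1 => by linarith [step1 c1 hc1]
  linarith
end

section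
/- Proposition 1, part (i) (redundancy of the purchase/sell complementarity constraint): Assume c⁺_t > c⁻_t ≥ 0 for every time slot t and ρ_ω > 0 for every scenario ω. Then every relaxed feasible solution for a coalition S whose cost equals ν(S) (i.e., every cost-minimizing relaxed feasible solution) satisfies p^{g+}_{i,t,ω} · p^{g−}_{i,t,ω} = 0 for all i ∈ S, t, ω. In particular, if p^{g+}_{i,t,ω} > 0 and p^{g−}_{i,t,ω} > 0 for some (i,t,ω), then subtracting m = min(p^{g+}_{i,t,ω}, p^{g−}_{i,t,ω}) from both yields another relaxed feasible solution with strictly smaller cost. -/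
open Finset

variable {ι Ω : Type} {T : ℕ}

/-- The solution obtained from `s` by subtracting `m` from both the grid purchase and the
grid sale of building `i` at time `t` in scenario `ω` (all other variables unchanged). -/
def shiftBuySell [DecidableEq ι] [DecidableEq Ω] (s : ESSol ι Ω T)
    (i : ι) (t : Fin T) (ω : Ω) (m : ℝ) : ESSol ι Ω T :=
  { s with
    pbuy := fun j u ω' =>
      if j = i ∧ u = t ∧ ω' = ω then s.pbuy i t ω - m else s.pbuy j u ω'
    psell := fun j u ω' =>
      if j = i ∧ u = t ∧ ω' = ω then s.psell i t ω - m else s.psell j u ω' }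

private lemma sum_ite_sub {α : Type*} [DecidableEq α] (s : Finset α) (g : α → ℝ) (a : α)
    (ha : a ∈ s) (c : ℝ) :
    ∑ x ∈ s, (if x = a then g a - c else g x) = (∑ x ∈ s, g x) - c := by
  have h : ∀ x ∈ s, (if x = a then g a - c else g x) = g x - (if x = a then c else 0) := by
    intro x hx; split_ifs with h
    · subst h; ring
    · ring
  rw [Finset.sum_congr rfl h, Finset.sum_sub_distrib,
    Finset.sum_ite_eq' s a (fun _ => c), if_pos ha]

/-- **Proposition 1, part (i).** Assume `c⁺ₜ > c⁻ₜ ≥ 0` for every `t` and `ρ_ω > 0` for every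
`ω`. Then every cost-minimizing relaxed feasible solution for a coalition `S` satisfies
`p^{g+}_{i,t,ω} · p^{g-}_{i,t,ω} = 0`; in particular, if both are positive at some `(i,t,ω)`,
subtracting `m = min(p^{g+}, p^{g-})` from both yields another relaxed feasible solution
with strictly smaller cost. -/
theorem es_buy_sell_complementarity [Fintype Ω] [DecidableEq ι] [DecidableEq Ω]
    (p : ESParams ι Ω T)
    (hprice : ∀ t : Fin T, 0 ≤ p.csell t ∧ p.csell t < p.cbuy t)
    (hρ : ∀ ω : Ω, 0 < p.ρ ω) (S : Finset ι) :
    (∀ s : ESSol ι Ω T, Feasible p S s → cost p S s = nu p S →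
      ∀ i ∈ S, ∀ t : Fin T, ∀ ω : Ω, s.pbuy i t ω * s.psell i t ω = 0) ∧
    (∀ s : ESSol ι Ω T, Feasible p S s → ∀ i ∈ S, ∀ t : Fin T, ∀ ω : Ω,
      0 < s.pbuy i t ω → 0 < s.psell i t ω →
      Feasible p S (shiftBuySell s i t ω (min (s.pbuy i t ω) (s.psell i t ω))) ∧
      cost p S (shiftBuySell s i t ω (min (s.pbuy i t ω) (s.psell i t ω))) < cost p S s) := by
  have key : ∀ s : ESSol ι Ω T, Feasible p S s → ∀ i ∈ S, ∀ t : Fin T, ∀ ω : Ω,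
      0 < s.pbuy i t ω → 0 < s.psell i t ω →
      Feasible p S (shiftBuySell s i t ω (min (s.pbuy i t ω) (s.psell i t ω))) ∧
      cost p S (shiftBuySell s i t ω (min (s.pbuy i t ω) (s.psell i t ω))) < cost p S s := by
    intro s hs i hi t ω hb hse
    set m := min (s.pbuy i t ω) (s.psell i t ω) with hmdef
    have hm0 : 0 < m := lt_min hb hse
    have hmb : m ≤ s.pbuy i t ω := min_le_left _ _
    have hms : m ≤ s.psell i t ω := min_le_right _ _
    obtain ⟨hE, hP, hop, hinit, hcap⟩ := hs
    have hpbuy : ∀ j u ω', (shiftBuySell s i t ω m).pbuy j u ω' =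
        if j = i ∧ u = t ∧ ω' = ω then s.pbuy i t ω - m else s.pbuy j u ω' :=
      fun _ _ _ => rfl
    have hpsell : ∀ j u ω', (shiftBuySell s i t ω m).psell j u ω' =
        if j = i ∧ u = t ∧ ω' = ω then s.psell i t ω - m else s.psell j u ω' :=
      fun _ _ _ => rfl
    constructor
    · refine ⟨hE, hP, ?_, hinit, hcap⟩
      intro j hj ω' u
      obtain ⟨h1, h2, h3, h4, h5, h6, h7, h8, h9, h10⟩ := hop j hj ω' u
      rw [show (shiftBuySell s i t ω m).pch = s.pch from rfl,
        show (shiftBuySell s i t ω m).pdis = s.pdis from rfl,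
        show (shiftBuySell s i t ω m).sto = s.sto from rfl,
        show (shiftBuySell s i t ω m).pmax = s.pmax from rfl,
        hpbuy, hpsell]
      by_cases hc : j = i ∧ u = t ∧ ω' = ω
      · obtain ⟨rfl, rfl, rfl⟩ := hc
        simp only [eq_self_iff_true, and_self, if_true]
        exact ⟨h1, h2, h3, h4, by linarith, by linarith, by linarith, by linarith,
          by linarith, h10⟩
      · rw [if_neg hc, if_neg hc]
        exact ⟨h1, h2, h3, h4, h5, h6, h7, h8, h9, h10⟩
    · set c : ℝ := (p.cbuy t - p.csell t) * m with hcdef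
      have hcpos : 0 < c :=
        mul_pos (sub_pos.mpr (hprice t).2) hm0
      have inner : ∑ u : Fin T,
            (p.cbuy u * (shiftBuySell s i t ω m).pbuy i u ω
              - p.csell u * (shiftBuySell s i t ω m).psell i u ω)
          = (∑ u : Fin T, (p.cbuy u * s.pbuy i u ω - p.csell u * s.psell i u ω)) - c := by
        rw [← sum_ite_sub Finset.univ
          (fun u => p.cbuy u * s.pbuy i u ω - p.csell u * s.psell i u ω) t
          (Finset.mem_univ t) c]
        apply Finset.sum_congr rfl
        intro u _
        rw [hpbuy, hpsell]
        by_cases hu : u = t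
        · subst hu
          simp only [eq_self_iff_true, and_self, if_true]
          ring
        · rw [if_neg (by simp [hu]), if_neg (by simp [hu]), if_neg hu]
      have mid : ∑ j ∈ S,
            ((∑ u : Fin T, (p.cbuy u * (shiftBuySell s i t ω m).pbuy j u ω
              - p.csell u * (shiftBuySell s i t ω m).psell j u ω))
              + p.cmax * s.pmax j ω)
          = (∑ j ∈ S,
              ((∑ u : Fin T, (p.cbuy u * s.pbuy j u ω - p.csell u * s.psell j u ω))
                + p.cmax * s.pmax j ω)) - c := by
        rw [← sum_ite_sub S
          (fun j => (∑ u : Fin T, (p.cbuy u * s.pbuy j u ω - p.csell u * s.psell j u ω))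
            + p.cmax * s.pmax j ω) i hi c]
        apply Finset.sum_congr rfl
        intro j hj
        by_cases hji : j = i
        · subst hji
          rw [if_pos rfl, inner]
          ring
        · rw [if_neg hji]
          congr 1
          apply Finset.sum_congr rfl
          intro u _
          rw [hpbuy, hpsell, if_neg (by simp [hji]), if_neg (by simp [hji])]
      have outer : ∑ ω' : Ω, p.ρ ω' * ∑ j ∈ S,
            ((∑ u : Fin T, (p.cbuy u * (shiftBuySell s i t ω m).pbuy j u ω'
              - p.csell u * (shiftBuySell s i t ω m).psell j u ω'))
              + p.cmax * s.pmax j ω')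
          = (∑ ω' : Ω, p.ρ ω' * ∑ j ∈ S,
              ((∑ u : Fin T, (p.cbuy u * s.pbuy j u ω' - p.csell u * s.psell j u ω'))
                + p.cmax * s.pmax j ω')) - p.ρ ω * c := by
        rw [← sum_ite_sub Finset.univ
          (fun ω' => p.ρ ω' * ∑ j ∈ S,
            ((∑ u : Fin T, (p.cbuy u * s.pbuy j u ω' - p.csell u * s.psell j u ω'))
              + p.cmax * s.pmax j ω')) ω (Finset.mem_univ ω) (p.ρ ω * c)]
        apply Finset.sum_congr rfl
        intro ω' _
        by_cases hω : ω' = ω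
        · subst hω
          rw [if_pos rfl, mid]
          ring
        · rw [if_neg hω]
          congr 1
          apply Finset.sum_congr rfl
          intro j _
          congr 1
          apply Finset.sum_congr rfl
          intro u _
          rw [hpbuy, hpsell, if_neg (by simp [hω]), if_neg (by simp [hω])]
      have hcost : cost p S (shiftBuySell s i t ω m) = cost p S s - p.ρ ω * c := by
        unfold cost
        rw [show (shiftBuySell s i t ω m).E = s.E from rfl,
          show (shiftBuySell s i t ω m).P = s.P from rfl,
          show (shiftBuySell s i t ω m).pmax = s.pmax from rfl, outer]
        ring
      rw [hcost]
      have : 0 < p.ρ ω * c := mul_pos (hρ ω) hcpos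
      linarith
  refine ⟨?_, key⟩
  intro s hs hnu i hi t ω
  by_contra hne
  obtain ⟨hb0, hs0⟩ := mul_ne_zero_iff.mp hne
  obtain ⟨_, _, hop, hinit, _⟩ := id hs
  obtain ⟨a1, a2, a3, a4, a5, a6, a7, a8, a9, a10⟩ := hop i hi ω t
  have hb : 0 < s.pbuy i t ω := lt_of_le_of_ne a5 (Ne.symm hb0)
  have hse : 0 < s.psell i t ω := lt_of_le_of_ne a6 (Ne.symm hs0)
  obtain ⟨hf', hc'⟩ := key s hs i hi t ω hb hse
  have hbdd : BddBelow {c : ℝ | ∃ s : ESSol ι Ω T, Feasible p S s ∧ cost p S s = c} := by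
    refine ⟨∑ ω : Ω, p.ρ ω * ∑ j ∈ S, ∑ u : Fin T, p.cbuy u * (p.d j u ω - p.pdismax), ?_⟩
    rintro c ⟨s', hs', rfl⟩
    obtain ⟨hE, hP, hop', hinit', _⟩ := hs'
    unfold cost
    have h1 : ∀ ω'' : Ω, (∑ j ∈ S, ∑ u : Fin T, p.cbuy u * (p.d j u ω'' - p.pdismax))
        ≤ ∑ j ∈ S, ((∑ u : Fin T, (p.cbuy u * s'.pbuy j u ω'' - p.csell u * s'.psell j u ω''))
            + p.cmax * s'.pmax j ω'') := by
      intro ω''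
      apply Finset.sum_le_sum
      intro j hj
      have hpm := (hinit' j hj ω'').2.1
      have hsum : ∑ u : Fin T, p.cbuy u * (p.d j u ω'' - p.pdismax)
          ≤ ∑ u : Fin T, (p.cbuy u * s'.pbuy j u ω'' - p.csell u * s'.psell j u ω'') := by
        apply Finset.sum_le_sum
        intro u _
        obtain ⟨b1, b2, b3, b4, b5, b6, b7, b8, b9, b10⟩ := hop' j hj ω'' u
        obtain ⟨hc1, hc2⟩ := hprice u
        have hbuy0 : (0:ℝ) ≤ p.cbuy u := le_trans hc1 hc2.le
        nlinarith [mul_nonneg (sub_pos.mpr hc2).le b6,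
          mul_nonneg hbuy0 (by linarith : (0:ℝ) ≤ s'.pch j u ω'' + p.pdismax - s'.pdis j u ω'')]
      nlinarith [mul_nonneg p.cmax_nonneg hpm]
    have h2 : ∑ ω'' : Ω, p.ρ ω'' * ∑ j ∈ S, ∑ u : Fin T, p.cbuy u * (p.d j u ω'' - p.pdismax)
        ≤ ∑ ω'' : Ω, p.ρ ω'' * ∑ j ∈ S,
            ((∑ u : Fin T, (p.cbuy u * s'.pbuy j u ω'' - p.csell u * s'.psell j u ω''))
              + p.cmax * s'.pmax j ω'') :=
      Finset.sum_le_sum fun ω'' _ => mul_le_mul_of_nonneg_left (h1 ω'') (p.ρ_nonneg ω'')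
    have hke : 0 ≤ p.ke * s'.E := mul_nonneg p.ke_nonneg hE
    have hkp : 0 ≤ p.kp * s'.P := mul_nonneg p.kp_nonneg hP
    linarith
  have hmem : cost p S (shiftBuySell s i t ω (min (s.pbuy i t ω) (s.psell i t ω)))
      ∈ {c : ℝ | ∃ s : ESSol ι Ω T, Feasible p S s ∧ cost p S s = c} := ⟨_, hf', rfl⟩
  have hle : nu p S ≤ cost p S (shiftBuySell s i t ω (min (s.pbuy i t ω) (s.psell i t ω))) :=
    csInf_le hbdd hmem
  rw [hnu] at hc'
  linarith
end

section
/- Proposition 1 (relaxation of the complementarity constraints is exact): Assume 0 ≤ c⁻_t ≤ c⁺_t for every time slot t and that the demand-charge price satisfies c^max = 0. Then for every coalition S ⊆ 𝒩, ν(S) = ν°(S); that is, dropping the complementarity constraints p^{ch}_{i,t,ω} p^{dis}_{i,t,ω} = 0 and p^{g+}_{i,t,ω} p^{g−}_{i,t,ω} = 0 does not change the optimal value: for every relaxed feasible solution there exists a feasible solution satisfying both families of complementarity constraints whose cost is no greater. -/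
open Finset

variable {ι Ω : Type} {T : ℕ}

/-- Feasibility for the original (non-relaxed) problem: relaxed feasibility together with
the complementarity constraints
`p^{ch}_{i,t,ω} p^{dis}_{i,t,ω} = 0` and `p^{g+}_{i,t,ω} p^{g-}_{i,t,ω} = 0`. -/
def FeasibleC [Fintype Ω] (p : ESParams ι Ω T) (S : Finset ι) (s : ESSol ι Ω T) : Prop :=
  Feasible p S s ∧
    ∀ i ∈ S, ∀ ω : Ω, ∀ t : Fin T,
      s.pch i t ω * s.pdis i t ω = 0 ∧ s.pbuy i t ω * s.psell i t ω = 0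

/-- Coalition value of the original (non-relaxed) problem. -/
noncomputable def nuC [Fintype Ω] (p : ESParams ι Ω T) (S : Finset ι) : ℝ :=
  sInf {c : ℝ | ∃ s : ESSol ι Ω T, FeasibleC p S s ∧ cost p S s = c}

private lemma key_cost (cb cs pb ps b : ℝ) (hcs : 0 ≤ cs) (hcb : cs ≤ cb)
    (hpb : 0 ≤ pb) (hps : 0 ≤ ps) (hb : b ≤ pb - ps) :
    cb * max b 0 - cs * max (-b) 0 ≤ cb * pb - cs * ps := by
  rcases le_total 0 b with h | h
  · rw [max_eq_left h, max_eq_right (by linarith)]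
    nlinarith
  · rw [max_eq_right h, max_eq_left (by linarith)]
    nlinarith

theorem es_construct [Fintype Ω] (p : ESParams ι Ω T)
    (hprice : ∀ t : Fin T, 0 ≤ p.csell t ∧ p.csell t ≤ p.cbuy t)
    (hcmax : p.cmax = 0) (S : Finset ι) (s : ESSol ι Ω T) (hs : Feasible p S s) :
    ∃ s' : ESSol ι Ω T, FeasibleC p S s' ∧ cost p S s' ≤ cost p S s := by
  obtain ⟨hE, hP, hop, hst, hcap⟩ := hs
  set η := p.ηch * p.ηdis with hη
  have hηpos : 0 < η := mul_pos p.ηch_pos p.ηdis_pos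
  have hηle : η ≤ 1 := by
    nlinarith [p.ηch_pos.le, p.ηdis_pos.le, p.ηch_le_one, p.ηdis_le_one]
  set δ : ι → Fin T → Ω → ℝ := fun i t ω => min (s.pch i t ω) (s.pdis i t ω / η) with hδ
  set b : ι → Fin T → Ω → ℝ := fun i t ω =>
    (s.pch i t ω - δ i t ω) - (s.pdis i t ω - η * δ i t ω) + p.d i t ω with hb
  -- basic facts for members of S
  have hδ0 : ∀ i ∈ S, ∀ ω, ∀ t, 0 ≤ δ i t ω := by
    intro i hi ω t
    obtain ⟨h1, _, h3, _⟩ := hop i hi ω t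
    exact le_min h1 (div_nonneg h3 hηpos.le)
  have hδch : ∀ i t ω, δ i t ω ≤ s.pch i t ω := fun i t ω => min_le_left _ _
  have hδdis : ∀ i t ω, η * δ i t ω ≤ s.pdis i t ω := by
    intro i t ω
    have := min_le_right (s.pch i t ω) (s.pdis i t ω / η)
    calc η * δ i t ω ≤ η * (s.pdis i t ω / η) := by
          exact mul_le_mul_of_nonneg_left this hηpos.le
      _ = s.pdis i t ω := by field_simp
  refine ⟨⟨s.E, s.P, fun i t ω => s.pch i t ω - δ i t ω,
    fun i t ω => s.pdis i t ω - η * δ i t ω, s.sto,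
    fun i t ω => max (b i t ω) 0, fun i t ω => max (-(b i t ω)) 0,
    fun i ω => s.pmax i ω + ∑ t : Fin T, (max (b i t ω) 0 + max (-(b i t ω)) 0)⟩,
    ⟨⟨hE, hP, ?_, ?_, ?_⟩, ?_⟩, ?_⟩
  · -- operation constraints
    intro i hi ω t
    dsimp only
    obtain ⟨h1, h2, h3, h4, h5, h6, h7, h8, h9, h10⟩ := hop i hi ω t
    have hd0 := hδ0 i hi ω t
    have hdc := hδch i t ω
    have hdd := hδdis i t ω
    have hpm : 0 ≤ s.pmax i ω := (hst i hi ω).2.1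
    have hsum : ∀ t' : Fin T,
        max (b i t' ω) 0 + max (-(b i t' ω)) 0 ≤
          ∑ t'' : Fin T, (max (b i t'' ω) 0 + max (-(b i t'' ω)) 0) :=
      fun t' => Finset.single_le_sum
        (f := fun t'' : Fin T => max (b i t'' ω) 0 + max (-(b i t'' ω)) 0)
        (fun _ _ => add_nonneg (le_max_right _ _) (le_max_right _ _)) (Finset.mem_univ t')
    refine ⟨by linarith, by linarith, by linarith, by nlinarith, le_max_right _ _,
      le_max_right _ _, ?_, ?_, ?_, ?_⟩
    · have : max (b i t ω) 0 - max (-(b i t ω)) 0 = b i t ω := by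
        rcases le_total 0 (b i t ω) with h | h
        · rw [max_eq_left h, max_eq_right (by linarith)]; ring
        · rw [max_eq_right h, max_eq_left (by linarith)]; ring
      rw [this]
    · have := hsum t
      have : max (b i t ω) 0 ≤ ∑ t'' : Fin T, (max (b i t'' ω) 0 + max (-(b i t'' ω)) 0) := by
        have h0 : (0:ℝ) ≤ max (-(b i t ω)) 0 := le_max_right _ _
        linarith [hsum t]
      linarith
    · have : max (-(b i t ω)) 0 ≤ ∑ t'' : Fin T, (max (b i t'' ω) 0 + max (-(b i t'' ω)) 0) := by
        have h0 : (0:ℝ) ≤ max (b i t ω) 0 := le_max_right _ _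
        linarith [hsum t]
      linarith
    · rw [h10]
      have hch := p.ηch_pos.ne'
      have hdis := p.ηdis_pos.ne'
      field_simp [hη]
      ring
  · -- storage initial conditions / pmax nonneg
    intro i hi ω
    dsimp only
    obtain ⟨hs0, hpm, hsn⟩ := hst i hi ω
    refine ⟨hs0, ?_, hsn⟩
    have h : (0:ℝ) ≤ ∑ t : Fin T, (max (b i t ω) 0 + max (-(b i t ω)) 0) :=
      Finset.sum_nonneg fun t _ => add_nonneg (le_max_right _ _) (le_max_right _ _)
    show (0:ℝ) ≤ s.pmax i ω + ∑ t : Fin T, (max (b i t ω) 0 + max (-(b i t ω)) 0)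
    linarith
  · -- capacity constraints
    intro ω t
    dsimp only
    obtain ⟨hc1, hc2, hc3⟩ := hcap ω t
    refine ⟨hc1, ?_, ?_⟩
    · calc ∑ i ∈ S, (s.pch i t ω - δ i t ω) ≤ ∑ i ∈ S, s.pch i t ω :=
            Finset.sum_le_sum fun i hi => by linarith [hδ0 i hi ω t]
        _ ≤ s.P := hc2
    · calc ∑ i ∈ S, (s.pdis i t ω - η * δ i t ω) ≤ ∑ i ∈ S, s.pdis i t ω :=
            Finset.sum_le_sum fun i hi => by nlinarith [hδ0 i hi ω t, hηpos.le]
        _ ≤ s.P := hc3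
  · -- complementarity
    intro i hi ω t
    dsimp only
    constructor
    · show (s.pch i t ω - δ i t ω) * (s.pdis i t ω - η * δ i t ω) = 0
      rcases min_cases (s.pch i t ω) (s.pdis i t ω / η) with ⟨heq, _⟩ | ⟨heq, _⟩
      · have h0 : s.pch i t ω - δ i t ω = 0 := by rw [hδ]; simp [heq]
        rw [h0, zero_mul]
      · have h0 : s.pdis i t ω - η * δ i t ω = 0 := by
          rw [hδ]; simp only [heq]; field_simp; ring
        rw [h0, mul_zero]
    · show max (b i t ω) 0 * max (-(b i t ω)) 0 = 0
      rcases le_total 0 (b i t ω) with h | h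
      · rw [max_eq_right (a := -(b i t ω)) (by linarith), mul_zero]
      · rw [max_eq_right (a := b i t ω) h, zero_mul]
  · -- cost comparison
    unfold cost
    dsimp only
    simp only [hcmax, zero_mul, add_zero]
    refine add_le_add_right (Finset.sum_le_sum fun ω _ => ?_) _
    refine mul_le_mul_of_nonneg_left (Finset.sum_le_sum fun i hi => ?_) (p.ρ_nonneg ω)
    refine Finset.sum_le_sum fun t _ => ?_
    obtain ⟨h1, h2, h3, h4, h5, h6, h7, h8, h9, h10⟩ := hop i hi ω t
    have hd0 := hδ0 i hi ω t
    have hble : b i t ω ≤ s.pbuy i t ω - s.psell i t ω := by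
      have hbe : b i t ω = (s.pch i t ω - s.pdis i t ω + p.d i t ω) - (1 - η) * δ i t ω := by
        rw [hb]; ring
      rw [hbe, ← h7]
      nlinarith
    exact key_cost _ _ _ _ _ (hprice t).1 (hprice t).2 h5 h6 hble


/-- **Proposition 1 (exactness of the relaxation).** If `0 ≤ c⁻ₜ ≤ c⁺ₜ` for all `t` and the
demand-charge price vanishes, then `ν(S) = ν°(S)` for every coalition `S`: dropping the
complementarity constraints does not change the optimal value, and every relaxed feasible
solution is dominated by a feasible solution satisfying both complementarity families. -/
theorem es_relaxation_exact [Fintype Ω] (p : ESParams ι Ω T)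
    (hprice : ∀ t : Fin T, 0 ≤ p.csell t ∧ p.csell t ≤ p.cbuy t)
    (hcmax : p.cmax = 0) (S : Finset ι) :
    nu p S = nuC p S ∧
    ∀ s : ESSol ι Ω T, Feasible p S s →
      ∃ s' : ESSol ι Ω T, FeasibleC p S s' ∧ cost p S s' ≤ cost p S s := by
  constructor
  · -- nu = nuC
    set A := {c : ℝ | ∃ s : ESSol ι Ω T, Feasible p S s ∧ cost p S s = c} with hA
    set B := {c : ℝ | ∃ s : ESSol ι Ω T, FeasibleC p S s ∧ cost p S s = c} with hB
    have hBA : B ⊆ A := fun c ⟨s, hs, hc⟩ => ⟨s, hs.1, hc⟩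
    -- a trivially feasible relaxed solution
    have hs0 : Feasible p S (⟨0, 0, fun _ _ _ => 0, fun _ _ _ => 0, fun _ _ _ => 0,
        fun i t ω => max (p.d i t ω) 0, fun i t ω => max (-(p.d i t ω)) 0,
        fun i ω => ∑ t : Fin T, (max (p.d i t ω) 0 + max (-(p.d i t ω)) 0)⟩ : ESSol ι Ω T) := by
      refine ⟨le_refl 0, le_refl 0, ?_, ?_, ?_⟩
      · intro i hi ω t
        dsimp only
        have hsum : ∀ t' : Fin T,
            max (p.d i t' ω) 0 + max (-(p.d i t' ω)) 0 ≤
              ∑ t'' : Fin T, (max (p.d i t'' ω) 0 + max (-(p.d i t'' ω)) 0) :=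
          fun t' => Finset.single_le_sum
            (f := fun t'' : Fin T => max (p.d i t'' ω) 0 + max (-(p.d i t'' ω)) 0)
            (fun _ _ => add_nonneg (le_max_right _ _) (le_max_right _ _)) (Finset.mem_univ t')
        have h1 : (0:ℝ) ≤ max (p.d i t ω) 0 := le_max_right _ _
        have h2 : (0:ℝ) ≤ max (-(p.d i t ω)) 0 := le_max_right _ _
        refine ⟨le_refl 0, p.pchmax_nonneg, le_refl 0, p.pdismax_nonneg, h1, h2, ?_,
          by linarith [hsum t], by linarith [hsum t], by simp [p.ηdis_pos.ne']⟩
        rcases le_total 0 (p.d i t ω) with h | h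
        · rw [max_eq_left h, max_eq_right (by linarith)]; ring
        · rw [max_eq_right h, max_eq_left (by linarith)]; ring
      · intro i hi ω
        dsimp only
        exact ⟨rfl, Finset.sum_nonneg fun t _ =>
          add_nonneg (le_max_right _ _) (le_max_right _ _), fun n _ => le_refl 0⟩
      · intro ω t
        simp
    obtain ⟨s1, hs1, hcost1⟩ := es_construct p hprice hcmax S _ hs0
    have hBne : B.Nonempty := ⟨cost p S s1, s1, hs1, rfl⟩
    have hAne : A.Nonempty := hBne.mono hBA
    have hdom : ∀ a ∈ A, ∃ c ∈ B, c ≤ a := by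
      rintro a ⟨s, hs, rfl⟩
      obtain ⟨s', hs', hc'⟩ := es_construct p hprice hcmax S s hs
      exact ⟨cost p S s', ⟨s', hs', rfl⟩, hc'⟩
    by_cases hbd : BddBelow B
    · have hAbd : BddBelow A := by
        obtain ⟨m, hm⟩ := hbd
        refine ⟨m, fun a ha => ?_⟩
        obtain ⟨c, hcB, hca⟩ := hdom a ha
        exact (hm hcB).trans hca
      refine le_antisymm (csInf_le_csInf hAbd hBne hBA) ?_
      refine le_csInf hAne fun a ha => ?_
      obtain ⟨c, hcB, hca⟩ := hdom a ha
      exact (csInf_le hbd hcB).trans hca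
    · have hAnb : ¬ BddBelow A := fun h => hbd (h.mono hBA)
      show sInf A = sInf B
      rw [Real.sInf_of_not_bddBelow hAnb, Real.sInf_of_not_bddBelow hbd]
  · exact fun s hs => es_construct p hprice hcmax S s hs
end
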